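/- For any Schwartz function u of (t,x), ‖u‖_{L^∞_t L²_x} ≤ C ‖(∂_t + ∂ₓₓₓ − ∂ₓₓ + I) u‖_{L¹_t L²_x}. -/

import Mathlib

open MeasureTheory SchwartzMap Complex

noncomputable def Dx (g : SchwartzMap (ℝ × ℝ) ℂ) : SchwartzMap (ℝ × ℝ) ℂ :=
  LineDeriv.lineDerivOp ((0 : ℝ), (1 : ℝ)) g

noncomputable def Dt (g : SchwartzMap (ℝ × ℝ) ℂ) : SchwartzMap (ℝ × ℝ) ℂ :=
  LineDeriv.lineDerivOp ((1 : ℝ), (0 : ℝ)) g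

lemma hasDerivAt_sliceX (g : SchwartzMap (ℝ × ℝ) ℂ) (t x : ℝ) :
    HasDerivAt (fun y => g (t, y)) (Dx g (t, x)) x := by
  have h1 : HasDerivAt (fun y : ℝ => ((t, y) : ℝ × ℝ)) (((0 : ℝ), (1 : ℝ))) x :=
    (hasDerivAt_const x t).prodMk (hasDerivAt_id x)
  have h2 := (g.differentiableAt.hasFDerivAt).comp_hasDerivAt x h1
  rw [Dx, SchwartzMap.lineDerivOp_apply_eq_fderiv]; exact h2

lemma hasDerivAt_sliceT (g : SchwartzMap (ℝ × ℝ) ℂ) (t x : ℝ) :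
    HasDerivAt (fun s => g (s, x)) (Dt g (t, x)) t := by
  have h1 : HasDerivAt (fun s : ℝ => ((s, x) : ℝ × ℝ)) (((1 : ℝ), (0 : ℝ))) t :=
    (hasDerivAt_id t).prodMk (hasDerivAt_const t x)
  have h2 := (g.differentiableAt.hasFDerivAt).comp_hasDerivAt t h1
  rw [Dt, SchwartzMap.lineDerivOp_apply_eq_fderiv]; exact h2

lemma deriv_sliceX (g : SchwartzMap (ℝ × ℝ) ℂ) (t : ℝ) :
    (deriv fun y => g (t, y)) = fun x => Dx g (t, x) :=
  funext fun x => (hasDerivAt_sliceX g t x).deriv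

/-- The linearized KdV-Burgers operator plus identity, `∂_t + ∂ₓₓₓ − ∂ₓₓ + I`. -/
noncomputable def kdvbOp (u : ℝ → ℝ → ℂ) (t x : ℝ) : ℂ :=
  deriv (fun s => u s x) t + iteratedDeriv 3 (fun y => u t y) x
    - iteratedDeriv 2 (fun y => u t y) x + u t x

lemma kdvb_eq (u : SchwartzMap (ℝ × ℝ) ℂ) (t x : ℝ) :
    kdvbOp (fun s y => u (s, y)) t x = (Dt u + Dx (Dx (Dx u)) - Dx (Dx u) + u) (t, x) := by
  have h2 : iteratedDeriv 2 (fun y => u (t, y)) x = Dx (Dx u) (t, x) := by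
    rw [iteratedDeriv_succ, iteratedDeriv_one, deriv_sliceX u t, deriv_sliceX (Dx u) t]
  have h3 : iteratedDeriv 3 (fun y => u (t, y)) x = Dx (Dx (Dx u)) (t, x) := by
    rw [iteratedDeriv_succ, iteratedDeriv_succ, iteratedDeriv_one,
      deriv_sliceX u t, deriv_sliceX (Dx u) t, deriv_sliceX (Dx (Dx u)) t]
  simp only [kdvbOp, (hasDerivAt_sliceT u t x).deriv, h2, h3, SchwartzMap.add_apply,
    SchwartzMap.sub_apply]

/-- decay bound separating the two variables -/
lemma schwartz_decay2 (g : SchwartzMap (ℝ × ℝ) ℂ) :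
    ∃ C : ℝ, 0 < C ∧ ∀ t x : ℝ, ‖g (t, x)‖ ≤ C / ((1 + t ^ 2) * (1 + x ^ 2)) := by
  obtain ⟨C0, hC0, h0⟩ := g.decay 0 0
  obtain ⟨C2, hC2, h2⟩ := g.decay 2 0
  obtain ⟨C4, hC4, h4⟩ := g.decay 4 0
  refine ⟨C0 + 2 * C2 + C4, by positivity, fun t x => ?_⟩
  have key : ∀ k : ℕ, ∀ C : ℝ, (∀ p, ‖p‖ ^ k * ‖iteratedFDeriv ℝ 0 g p‖ ≤ C) →
      ‖((t, x) : ℝ × ℝ)‖ ^ k * ‖g (t, x)‖ ≤ C := by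
    intro k C h
    simpa [norm_iteratedFDeriv_zero] using h (t, x)
  have hn : ∀ y : ℝ, |y| ≤ ‖((t, x) : ℝ × ℝ)‖ → y ^ 2 * ‖g (t, x)‖ ≤ C2 := by
    intro y hy
    refine le_trans ?_ (key 2 C2 h2)
    have : y ^ 2 ≤ ‖((t, x) : ℝ × ℝ)‖ ^ 2 := by
      rw [← _root_.sq_abs y]; exact pow_le_pow_left₀ (abs_nonneg y) hy 2
    exact mul_le_mul_of_nonneg_right this (norm_nonneg _)
  have hxt : |x| ≤ ‖((t, x) : ℝ × ℝ)‖ := by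
    simpa [Prod.norm_def] using le_max_right |t| |x|
  have htt : |t| ≤ ‖((t, x) : ℝ × ℝ)‖ := by
    simpa [Prod.norm_def] using le_max_left |t| |x|
  have h4' : t ^ 2 * x ^ 2 * ‖g (t, x)‖ ≤ C4 := by
    refine le_trans ?_ (key 4 C4 h4)
    have h1 : t ^ 2 * x ^ 2 ≤ ‖((t, x) : ℝ × ℝ)‖ ^ 2 * ‖((t, x) : ℝ × ℝ)‖ ^ 2 := by
      have a1 : t ^ 2 ≤ ‖((t, x) : ℝ × ℝ)‖ ^ 2 := by
        rw [← _root_.sq_abs t]; exact pow_le_pow_left₀ (abs_nonneg t) htt 2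
      have a2 : x ^ 2 ≤ ‖((t, x) : ℝ × ℝ)‖ ^ 2 := by
        rw [← _root_.sq_abs x]; exact pow_le_pow_left₀ (abs_nonneg x) hxt 2
      exact mul_le_mul a1 a2 (sq_nonneg x) (sq_nonneg _)
    calc t ^ 2 * x ^ 2 * ‖g (t, x)‖
        ≤ (‖((t, x) : ℝ × ℝ)‖ ^ 2 * ‖((t, x) : ℝ × ℝ)‖ ^ 2) * ‖g (t, x)‖ :=
          mul_le_mul_of_nonneg_right h1 (norm_nonneg _)
      _ = ‖((t, x) : ℝ × ℝ)‖ ^ 4 * ‖g (t, x)‖ := by ring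
  have h0' : ‖g (t, x)‖ ≤ C0 := by simpa using key 0 C0 h0
  have ht2 := hn t htt
  have hx2 := hn x hxt
  rw [le_div_iff₀ (by positivity)]
  nlinarith [norm_nonneg (g (t, x))]

/-- real inner product on ℂ -/
def dot (a b : ℂ) : ℝ := a.re * b.re + a.im * b.im

lemma dot_self_eq (a : ℂ) : dot a a = ‖a‖ ^ 2 := by
  rw [show ‖a‖ ^ 2 = Complex.normSq a by rw [Complex.sq_norm]]
  simp [dot, Complex.normSq_apply]

lemma abs_dot_le (a b : ℂ) : |dot a b| ≤ ‖a‖ * ‖b‖ := by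
  have h : dot a b = ((starRingEnd ℂ) a * b).re := by
    simp [dot, Complex.mul_re]
  rw [h]
  calc |((starRingEnd ℂ) a * b).re| ≤ ‖(starRingEnd ℂ) a * b‖ := Complex.abs_re_le_norm _
    _ = ‖a‖ * ‖b‖ := by rw [norm_mul, RCLike.norm_conj]

lemma hasDerivAt_dot {f g : ℝ → ℂ} {f' g' : ℂ} {t : ℝ}
    (hf : HasDerivAt f f' t) (hg : HasDerivAt g g' t) :
    HasDerivAt (fun s => dot (f s) (g s)) (dot f' (g t) + dot (f t) g') t := by
  have hfre : HasDerivAt (fun s => (f s).re) f'.re t :=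
    (Complex.reCLM.hasFDerivAt.comp_hasDerivAt t hf)
  have hfim : HasDerivAt (fun s => (f s).im) f'.im t :=
    (Complex.imCLM.hasFDerivAt.comp_hasDerivAt t hf)
  have hgre : HasDerivAt (fun s => (g s).re) g'.re t :=
    (Complex.reCLM.hasFDerivAt.comp_hasDerivAt t hg)
  have hgim : HasDerivAt (fun s => (g s).im) g'.im t :=
    (Complex.imCLM.hasFDerivAt.comp_hasDerivAt t hg)
  have := (hfre.mul hgre).add (hfim.mul hgim)
  exact this.congr_deriv (by simp only [dot]; ring)

lemma continuous_dot_slice_x (g h : SchwartzMap (ℝ × ℝ) ℂ) (t : ℝ) :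
    Continuous (fun x => dot (g (t, x)) (h (t, x))) := by
  have hg : Continuous fun x : ℝ => g (t, x) := g.continuous.comp (Continuous.prodMk_right t)
  have hh : Continuous fun x : ℝ => h (t, x) := h.continuous.comp (Continuous.prodMk_right t)
  exact ((Complex.continuous_re.comp hg).mul (Complex.continuous_re.comp hh)).add
    ((Complex.continuous_im.comp hg).mul (Complex.continuous_im.comp hh))

lemma integrable_of_decay {f : ℝ → ℝ} (hc : Continuous f) (C : ℝ)
    (h : ∀ x, |f x| ≤ C / (1 + x ^ 2)) : Integrable f := by
  refine (integrable_inv_one_add_sq.const_mul C).mono' hc.aestronglyMeasurable ?_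
  filter_upwards with x
  rw [Real.norm_eq_abs]
  calc |f x| ≤ C / (1 + x ^ 2) := h x
    _ = C * (1 + x ^ 2)⁻¹ := by rw [div_eq_mul_inv]

lemma bound_prod (g h : SchwartzMap (ℝ × ℝ) ℂ) :
    ∃ C : ℝ, 0 < C ∧ ∀ t x : ℝ, |dot (g (t, x)) (h (t, x))| ≤ C / (1 + x ^ 2) := by
  obtain ⟨Cg, hCg, hg⟩ := schwartz_decay2 g
  obtain ⟨Ch, hCh, hh⟩ := g.decay 0 0
  -- h bound : global bound on h
  obtain ⟨Ch', hCh', hh'⟩ := schwartz_decay2 h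
  obtain ⟨Cg0, hCg0, hg0⟩ := g.decay 0 0
  refine ⟨Cg * Ch', by positivity, fun t x => ?_⟩
  have h1 : ‖g (t, x)‖ ≤ Cg / (1 + x ^ 2) := by
    refine (hg t x).trans ?_
    apply div_le_div_of_nonneg_left hCg.le (by positivity)
    nlinarith [sq_nonneg t, sq_nonneg x, sq_nonneg (t*x)]
  have h2 : ‖h (t, x)‖ ≤ Ch' := by
    refine (hh' t x).trans ?_
    rw [div_le_iff₀ (by positivity)]
    nlinarith [sq_nonneg t, sq_nonneg x, sq_nonneg (t*x)]
  calc |dot (g (t, x)) (h (t, x))| ≤ ‖g (t, x)‖ * ‖h (t, x)‖ := abs_dot_le _ _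
    _ ≤ (Cg / (1 + x ^ 2)) * Ch' := by
        apply mul_le_mul h1 h2 (norm_nonneg _) (by positivity)
    _ = Cg * Ch' / (1 + x ^ 2) := by ring

lemma integrable_dot_slice (g h : SchwartzMap (ℝ × ℝ) ℂ) (t : ℝ) :
    Integrable (fun x => dot (g (t, x)) (h (t, x))) := by
  obtain ⟨C, _, hC⟩ := bound_prod g h
  exact integrable_of_decay (continuous_dot_slice_x g h t) C (fun x => hC t x)

/-- integral over ℝ of a derivative vanishes -/
lemma integral_deriv_zero {h h' : ℝ → ℝ} (hd : ∀ x, HasDerivAt h (h' x) x)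
    (hi : Integrable h') (hlimT : Filter.Tendsto h Filter.atTop (nhds 0))
    (hlimB : Filter.Tendsto h Filter.atBot (nhds 0)) : ∫ x, h' x = 0 := by
  have key : Filter.Tendsto (fun R : ℝ => ∫ x in (-R)..R, h' x) Filter.atTop
      (nhds (∫ x, h' x)) :=
    intervalIntegral_tendsto_integral hi Filter.tendsto_neg_atTop_atBot Filter.tendsto_id
  have eq1 : ∀ R : ℝ, ∫ x in (-R)..R, h' x = h R - h (-R) := fun R =>
    intervalIntegral.integral_eq_sub_of_hasDerivAt (fun x _ => hd x) hi.intervalIntegrable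
  have key2 : Filter.Tendsto (fun R : ℝ => h R - h (-R)) Filter.atTop (nhds (0 - 0)) :=
    hlimT.sub (hlimB.comp Filter.tendsto_neg_atTop_atBot)
  rw [show (0:ℝ) - 0 = 0 by ring] at key2
  have := tendsto_nhds_unique key (by simpa only [eq1] using key2)
  linarith

lemma dot_comm (a b : ℂ) : dot a b = dot b a := by simp [dot]; ring

lemma tendsto_decay_atTop (C : ℝ) :
    Filter.Tendsto (fun x : ℝ => C / (1 + x ^ 2)) Filter.atTop (nhds 0) := by
  have h1 : Filter.Tendsto (fun x : ℝ => 1 + x ^ 2) Filter.atTop Filter.atTop := by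
    apply Filter.tendsto_atTop_mono (fun x => ?_) Filter.tendsto_abs_atTop_atTop
    nlinarith [_root_.sq_abs x, abs_nonneg x, sq_nonneg (|x| - 1)]
  simpa [div_eq_mul_inv] using h1.inv_tendsto_atTop.const_mul C

lemma tendsto_decay_atBot (C : ℝ) :
    Filter.Tendsto (fun x : ℝ => C / (1 + x ^ 2)) Filter.atBot (nhds 0) := by
  have h1 : Filter.Tendsto (fun x : ℝ => 1 + x ^ 2) Filter.atBot Filter.atTop := by
    apply Filter.tendsto_atTop_mono (fun x => ?_) Filter.tendsto_abs_atBot_atTop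
    nlinarith [_root_.sq_abs x, abs_nonneg x, sq_nonneg (|x| - 1)]
  simpa [div_eq_mul_inv] using h1.inv_tendsto_atTop.const_mul C

lemma tendsto_zero_of_decay {f : ℝ → ℝ} {C : ℝ} (h : ∀ x, |f x| ≤ C / (1 + x ^ 2)) :
    Filter.Tendsto f Filter.atTop (nhds 0) ∧ Filter.Tendsto f Filter.atBot (nhds 0) := by
  constructor
  · exact squeeze_zero_norm (fun x => by rw [Real.norm_eq_abs]; exact h x) (tendsto_decay_atTop C)
  · exact squeeze_zero_norm (fun x => by rw [Real.norm_eq_abs]; exact h x) (tendsto_decay_atBot C)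

/-- integration by parts in `x` -/
lemma ibp (g h : SchwartzMap (ℝ × ℝ) ℂ) (t : ℝ) :
    ∫ x : ℝ, dot (g (t, x)) (Dx h (t, x))
      = - ∫ x : ℝ, dot (Dx g (t, x)) (h (t, x)) := by
  obtain ⟨C, _, hC⟩ := bound_prod g h
  have hd : ∀ x : ℝ, HasDerivAt (fun y => dot (g (t, y)) (h (t, y)))
      (dot (Dx g (t, x)) (h (t, x)) + dot (g (t, x)) (Dx h (t, x))) x := fun x =>
    hasDerivAt_dot (hasDerivAt_sliceX g t x) (hasDerivAt_sliceX h t x)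
  have hi1 := integrable_dot_slice (Dx g) h t
  have hi2 := integrable_dot_slice g (Dx h) t
  have hzero : ∫ x : ℝ, (dot (Dx g (t, x)) (h (t, x)) + dot (g (t, x)) (Dx h (t, x))) = 0 := by
    refine integral_deriv_zero hd (hi1.add hi2) ?_ ?_
    · exact (tendsto_zero_of_decay (fun x => hC t x)).1
    · exact (tendsto_zero_of_decay (fun x => hC t x)).2
  rw [integral_add hi1 hi2] at hzero
  linarith

noncomputable def W (u : SchwartzMap (ℝ × ℝ) ℂ) : SchwartzMap (ℝ × ℝ) ℂ :=
  Dt u + Dx (Dx (Dx u)) - Dx (Dx u) + u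

noncomputable def Fe (u : SchwartzMap (ℝ × ℝ) ℂ) (t : ℝ) : ℝ :=
  ∫ x : ℝ, dot (u (t, x)) (u (t, x))

noncomputable def Ee (u : SchwartzMap (ℝ × ℝ) ℂ) (t : ℝ) : ℝ :=
  ∫ x : ℝ, 2 * dot (u (t, x)) (Dt u (t, x))

lemma Fe_nonneg (u : SchwartzMap (ℝ × ℝ) ℂ) (t : ℝ) : 0 ≤ Fe u t :=
  integral_nonneg fun x => by rw [dot_self_eq]; positivity

lemma hasDerivAt_Fe (u : SchwartzMap (ℝ × ℝ) ℂ) (t₀ : ℝ) :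
    HasDerivAt (Fe u) (Ee u t₀) t₀ := by
  obtain ⟨C, hCpos, hC⟩ := bound_prod u (Dt u)
  have key := hasDerivAt_integral_of_dominated_loc_of_deriv_le (F := fun t x =>
      dot (u (t, x)) (u (t, x))) (F' := fun t x => 2 * dot (u (t, x)) (Dt u (t, x)))
      (x₀ := t₀) (bound := fun x => 2 * C / (1 + x ^ 2)) (s := Metric.ball t₀ 1) (Metric.ball_mem_nhds t₀ one_pos)
      (Filter.Eventually.of_forall fun t =>
        (continuous_dot_slice_x u u t).aestronglyMeasurable)
      (integrable_dot_slice u u t₀)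
      ((continuous_const.mul (continuous_dot_slice_x u (Dt u) t₀)).aestronglyMeasurable)
      (Filter.Eventually.of_forall fun x => fun t _ => ?_)
      ?_ (Filter.Eventually.of_forall fun x => fun t _ => ?_)
  · exact key.2
  · simp only [Real.norm_eq_abs, abs_mul, show |(2:ℝ)| = 2 by norm_num, mul_div_assoc]
    exact mul_le_mul_of_nonneg_left (hC t x) (by norm_num)
  · have h2 : Integrable (fun x : ℝ => 2 * C * (1 + x ^ 2)⁻¹) :=
      integrable_inv_one_add_sq.const_mul _
    simpa [div_eq_mul_inv] using h2
  · have h := hasDerivAt_dot (hasDerivAt_sliceT u t x) (hasDerivAt_sliceT u t x)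
    exact h.congr_deriv (by rw [dot_comm (Dt u (t,x)) (u (t,x))]; ring)

lemma bound_normprod (g h : SchwartzMap (ℝ × ℝ) ℂ) :
    ∃ C : ℝ, 0 < C ∧ ∀ t x : ℝ, ‖g (t, x)‖ * ‖h (t, x)‖ ≤ C / (1 + x ^ 2) := by
  obtain ⟨Cg, hCg, hg⟩ := schwartz_decay2 g
  obtain ⟨Ch', hCh', hh'⟩ := schwartz_decay2 h
  refine ⟨Cg * Ch', by positivity, fun t x => ?_⟩
  have h1 : ‖g (t, x)‖ ≤ Cg / (1 + x ^ 2) := by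
    refine (hg t x).trans ?_
    apply div_le_div_of_nonneg_left hCg.le (by positivity)
    nlinarith [sq_nonneg t, sq_nonneg x, sq_nonneg (t * x)]
  have h2 : ‖h (t, x)‖ ≤ Ch' := by
    refine (hh' t x).trans ?_
    rw [div_le_iff₀ (by positivity)]
    nlinarith [sq_nonneg t, sq_nonneg x, sq_nonneg (t * x)]
  calc ‖g (t, x)‖ * ‖h (t, x)‖ ≤ (Cg / (1 + x ^ 2)) * Ch' :=
        mul_le_mul h1 h2 (norm_nonneg _) (by positivity)
    _ = Cg * Ch' / (1 + x ^ 2) := by ring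

lemma integrable_normprod (g h : SchwartzMap (ℝ × ℝ) ℂ) (t : ℝ) :
    Integrable (fun x => ‖g (t, x)‖ * ‖h (t, x)‖) := by
  obtain ⟨C, _, hC⟩ := bound_normprod g h
  refine integrable_of_decay ?_ C (fun x => ?_)
  · exact ((g.continuous.comp (Continuous.prodMk_right t)).norm).mul
      ((h.continuous.comp (Continuous.prodMk_right t)).norm)
  · rw [_root_.abs_of_nonneg (by positivity)]; exact hC t x

lemma memL2_norm_slice (g : SchwartzMap (ℝ × ℝ) ℂ) (t : ℝ) :
    MemLp (fun x => ‖g (t, x)‖) (ENNReal.ofReal 2) (volume : Measure ℝ) := by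
  rw [show ENNReal.ofReal 2 = 2 by norm_num]
  refine (memLp_two_iff_integrable_sq
    ((g.continuous.comp (Continuous.prodMk_right t)).norm).aestronglyMeasurable).2 ?_
  have := integrable_normprod g g t
  simpa [← pow_two] using this

lemma cauchy_schwarz_slice (g h : SchwartzMap (ℝ × ℝ) ℂ) (t : ℝ) :
    ∫ x : ℝ, ‖g (t, x)‖ * ‖h (t, x)‖
      ≤ Real.sqrt (Fe g t) * Real.sqrt (Fe h t) := by
  have key := integral_mul_le_Lp_mul_Lq_of_nonneg (μ := (volume : Measure ℝ))
    Real.HolderConjugate.two_two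
    (Filter.Eventually.of_forall fun x => norm_nonneg (g (t, x)))
    (Filter.Eventually.of_forall fun x => norm_nonneg (h (t, x)))
    (memL2_norm_slice g t) (memL2_norm_slice h t)
  have e1 : ∀ k : SchwartzMap (ℝ × ℝ) ℂ, (∫ x : ℝ, ‖k (t, x)‖ ^ (2 : ℝ)) = Fe k t := by
    intro k
    refine integral_congr_ae (Filter.Eventually.of_forall fun x => ?_)
    show ‖k (t, x)‖ ^ (2 : ℝ) = dot (k (t, x)) (k (t, x))
    rw [dot_self_eq, show (2 : ℝ) = ((2 : ℕ) : ℝ) by norm_num, Real.rpow_natCast]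
  rw [e1 g, e1 h] at key
  simpa [Real.sqrt_eq_rpow] using key


lemma Ee_le (u : SchwartzMap (ℝ × ℝ) ℂ) (t : ℝ) :
    Ee u t ≤ 2 * (Real.sqrt (Fe u t) * Real.sqrt (Fe (W u) t)) := by
  have hint1 := integrable_dot_slice u (W u) t
  have hint2 := integrable_dot_slice u (Dx (Dx (Dx u))) t
  have hint3 := integrable_dot_slice u (Dx (Dx u)) t
  have hint4 := integrable_dot_slice u u t
  have h1' := hint1.const_mul 2
  have h2' := hint2.const_mul 2
  have h3' := hint3.const_mul 2
  have h4' := hint4.const_mul 2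
  have e : (fun x : ℝ => 2 * dot (u (t, x)) (Dt u (t, x)))
      = fun x : ℝ => 2 * dot (u (t, x)) (W u (t, x))
        - 2 * dot (u (t, x)) (Dx (Dx (Dx u)) (t, x))
        + 2 * dot (u (t, x)) (Dx (Dx u) (t, x))
        - 2 * dot (u (t, x)) (u (t, x)) := by
    funext x
    simp only [W, SchwartzMap.add_apply, SchwartzMap.sub_apply, dot]
    simp only [Complex.add_re, Complex.sub_re, Complex.add_im, Complex.sub_im]
    ring
  have step2 : Ee u t = 2 * (∫ x : ℝ, dot (u (t, x)) (W u (t, x)))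
      - 2 * (∫ x : ℝ, dot (u (t, x)) (Dx (Dx (Dx u)) (t, x)))
      + 2 * (∫ x : ℝ, dot (u (t, x)) (Dx (Dx u) (t, x)))
      - 2 * Fe u t := by
    have hA : Integrable (fun x : ℝ => 2 * dot (u (t, x)) (W u (t, x))
        - 2 * dot (u (t, x)) (Dx (Dx (Dx u)) (t, x))) := h1'.sub h2'
    have hB : Integrable (fun x : ℝ => (2 * dot (u (t, x)) (W u (t, x))
        - 2 * dot (u (t, x)) (Dx (Dx (Dx u)) (t, x)))
        + 2 * dot (u (t, x)) (Dx (Dx u) (t, x))) := hA.add h3'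
    rw [Ee, e, integral_sub hB h4', integral_add hA h3', integral_sub h1' h2']
    simp only [integral_const_mul, Fe]
  have i3 : (∫ x : ℝ, dot (u (t, x)) (Dx (Dx (Dx u)) (t, x))) = 0 := by
    have h1 := ibp u (Dx (Dx u)) t
    have h2 := ibp (Dx u) (Dx u) t
    have h3 : (∫ x : ℝ, dot (Dx (Dx u) (t, x)) (Dx u (t, x)))
        = ∫ x : ℝ, dot (Dx u (t, x)) (Dx (Dx u) (t, x)) :=
      integral_congr_ae (Filter.Eventually.of_forall fun x => dot_comm _ _)
    rw [h3] at h2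
    rw [h1]
    linarith
  have i2 : (∫ x : ℝ, dot (u (t, x)) (Dx (Dx u) (t, x))) ≤ 0 := by
    rw [ibp u (Dx u) t, neg_nonpos]
    exact integral_nonneg fun x => by rw [dot_self_eq]; positivity
  have iw : (∫ x : ℝ, dot (u (t, x)) (W u (t, x)))
      ≤ Real.sqrt (Fe u t) * Real.sqrt (Fe (W u) t) := by
    refine le_trans ?_ (cauchy_schwarz_slice u (W u) t)
    refine integral_mono hint1 (integrable_normprod u (W u) t) fun x => ?_
    exact (le_abs_self _).trans (abs_dot_le _ _)
  have hF := Fe_nonneg u t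
  linarith

lemma integrable_decayC (C : ℝ) : Integrable (fun x : ℝ => C / (1 + x ^ 2)) := by
  simpa [div_eq_mul_inv] using integrable_inv_one_add_sq.const_mul C

lemma continuous_int_dot (g h : SchwartzMap (ℝ × ℝ) ℂ) :
    Continuous (fun t => ∫ x : ℝ, dot (g (t, x)) (h (t, x))) := by
  obtain ⟨C, hCpos, hC⟩ := bound_prod g h
  apply MeasureTheory.continuous_of_dominated (bound := fun x : ℝ => C / (1 + x ^ 2))
  · exact fun t => (continuous_dot_slice_x g h t).aestronglyMeasurable
  · intro t
    filter_upwards with x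
    rw [Real.norm_eq_abs]; exact hC t x
  · exact integrable_decayC C
  · filter_upwards with x
    have hg : Continuous fun t : ℝ => g (t, x) :=
      g.continuous.comp (continuous_id.prodMk continuous_const)
    have hh : Continuous fun t : ℝ => h (t, x) :=
      h.continuous.comp (continuous_id.prodMk continuous_const)
    exact ((Complex.continuous_re.comp hg).mul (Complex.continuous_re.comp hh)).add
      ((Complex.continuous_im.comp hg).mul (Complex.continuous_im.comp hh))

lemma continuous_Fe (u : SchwartzMap (ℝ × ℝ) ℂ) : Continuous (Fe u) :=
  continuous_int_dot u u

lemma continuous_Ee (u : SchwartzMap (ℝ × ℝ) ℂ) : Continuous (Ee u) := by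
  have : Ee u = fun t => 2 * ∫ x : ℝ, dot (u (t, x)) (Dt u (t, x)) := by
    funext t; rw [Ee, integral_const_mul]
  rw [this]
  exact continuous_const.mul (continuous_int_dot u (Dt u))

lemma Fe_bound (u : SchwartzMap (ℝ × ℝ) ℂ) :
    ∃ C : ℝ, 0 < C ∧ ∀ t : ℝ, Fe u t ≤ C / (1 + t ^ 2) ^ 2 := by
  obtain ⟨Cu, hCu, hu⟩ := schwartz_decay2 u
  set J : ℝ := ∫ x : ℝ, (1 + x ^ 2)⁻¹ with hJ
  have hJ0 : 0 ≤ J := integral_nonneg fun x => by positivity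
  refine ⟨Cu ^ 2 * J + 1, by positivity, fun t => ?_⟩
  have key : Fe u t ≤ (Cu ^ 2 / (1 + t ^ 2) ^ 2) * J := by
    rw [hJ, ← integral_const_mul]
    refine integral_mono (integrable_dot_slice u u t) ?_ fun x => ?_
    · exact integrable_inv_one_add_sq.const_mul _
    · show dot (u (t, x)) (u (t, x)) ≤ _
      rw [dot_self_eq]
      have h1 : ‖u (t, x)‖ ≤ Cu / ((1 + t ^ 2) * (1 + x ^ 2)) := hu t x
      have h2 : ‖u (t, x)‖ ^ 2 ≤ (Cu / ((1 + t ^ 2) * (1 + x ^ 2))) ^ 2 :=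
        pow_le_pow_left₀ (norm_nonneg _) h1 2
      refine h2.trans ?_
      have e : (Cu / ((1 + t ^ 2) * (1 + x ^ 2))) ^ 2
          = Cu ^ 2 / (1 + t ^ 2) ^ 2 * ((1 + x ^ 2) ^ 2)⁻¹ := by
        rw [div_pow, mul_pow, div_eq_mul_inv, div_eq_mul_inv, mul_inv, mul_assoc]
      have h4 : ((1 + x ^ 2) ^ 2)⁻¹ ≤ (1 + x ^ 2)⁻¹ := by
        apply inv_anti₀ (by positivity)
        nlinarith [sq_nonneg x]
      rw [e]
      exact mul_le_mul_of_nonneg_left h4 (by positivity)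
  refine key.trans ?_
  rw [div_mul_eq_mul_div, div_le_div_iff₀ (by positivity) (by positivity)]
  nlinarith [sq_nonneg ((1 + t ^ 2) ^ 2), sq_nonneg t]

lemma main_core (u : SchwartzMap (ℝ × ℝ) ℂ) (t : ℝ) :
    Real.sqrt (Fe u t) ≤ 2 * ∫ s : ℝ, Real.sqrt (Fe (W u) s) := by
  obtain ⟨Cw, hCw, hW⟩ := Fe_bound (W u)
  obtain ⟨Cu, hCu, hFu⟩ := Fe_bound u
  set G : ℝ → ℝ := fun s => Real.sqrt (Fe (W u) s) with hGdef
  have hGcont : Continuous G := Real.continuous_sqrt.comp (continuous_Fe (W u))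
  have hGbd : ∀ s, G s ≤ Real.sqrt Cw / (1 + s ^ 2) := by
    intro s
    refine (Real.sqrt_le_sqrt (hW s)).trans (le_of_eq ?_)
    rw [show Cw / (1 + s ^ 2) ^ 2 = Cw * ((1 + s ^ 2) ^ 2)⁻¹ by rw [div_eq_mul_inv],
      Real.sqrt_mul hCw.le, Real.sqrt_inv, Real.sqrt_sq (by positivity), div_eq_mul_inv]
  have hGint : Integrable G := by
    refine integrable_of_decay hGcont (Real.sqrt Cw) fun s => ?_
    rw [_root_.abs_of_nonneg (Real.sqrt_nonneg _)]
    exact hGbd s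
  set I : ℝ := ∫ s : ℝ, G s with hIdef
  have hI0 : 0 ≤ I := integral_nonneg fun s => Real.sqrt_nonneg _
  have hbdd : BddAbove (Set.range (Fe u)) := by
    refine ⟨Cu, ?_⟩
    rintro _ ⟨s, rfl⟩
    refine (hFu s).trans (div_le_self hCu.le ?_)
    nlinarith [sq_nonneg s, sq_nonneg (s ^ 2)]
  set M : ℝ := sSup (Set.range (Fe u)) with hMdef
  have hFM : ∀ s, Fe u s ≤ M := fun s => le_csSup hbdd ⟨s, rfl⟩
  have hM0 : 0 ≤ M := (Fe_nonneg u 0).trans (hFM 0)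
  have key : ∀ t' : ℝ, Fe u t' ≤ 2 * Real.sqrt M * I := by
    intro t'
    have ev : ∀ᶠ a in Filter.atBot, Fe u t' ≤ Fe u a + 2 * Real.sqrt M * I := by
      filter_upwards [Filter.eventually_le_atBot t'] with a ha
      have ftc : ∫ s in a..t', Ee u s = Fe u t' - Fe u a :=
        intervalIntegral.integral_eq_sub_of_hasDerivAt (fun s _ => hasDerivAt_Fe u s)
          ((continuous_Ee u).intervalIntegrable a t')
      have mono : ∫ s in a..t', Ee u s ≤ ∫ s in a..t', 2 * Real.sqrt M * G s := by
        refine intervalIntegral.integral_mono_on ha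
          ((continuous_Ee u).intervalIntegrable a t')
          ((continuous_const.mul hGcont).intervalIntegrable a t') fun s _ => ?_
        have h2 : Real.sqrt (Fe u s) ≤ Real.sqrt M := Real.sqrt_le_sqrt (hFM s)
        have h3 : Real.sqrt (Fe u s) * G s ≤ Real.sqrt M * G s :=
          mul_le_mul_of_nonneg_right h2 (Real.sqrt_nonneg _)
        calc Ee u s ≤ 2 * (Real.sqrt (Fe u s) * G s) := Ee_le u s
          _ ≤ 2 * (Real.sqrt M * G s) := by linarith
          _ = 2 * Real.sqrt M * G s := by ring
      have tail : ∫ s in a..t', 2 * Real.sqrt M * G s ≤ 2 * Real.sqrt M * I := by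
        rw [intervalIntegral.integral_const_mul]
        refine mul_le_mul_of_nonneg_left ?_ (by positivity)
        rw [intervalIntegral.integral_of_le ha]
        exact setIntegral_le_integral hGint
          (Filter.Eventually.of_forall fun s => Real.sqrt_nonneg _)
      linarith
    have hFa0 : Filter.Tendsto (Fe u) Filter.atBot (nhds 0) := by
      apply squeeze_zero_norm (fun a => ?_) (tendsto_decay_atBot Cu)
      rw [Real.norm_eq_abs, _root_.abs_of_nonneg (Fe_nonneg u a)]
      refine (hFu a).trans ?_
      apply div_le_div_of_nonneg_left hCu.le (by positivity)
      nlinarith [sq_nonneg a, sq_nonneg (a ^ 2)]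
    have hlim : Filter.Tendsto (fun a => Fe u a + 2 * Real.sqrt M * I) Filter.atBot
        (nhds (0 + 2 * Real.sqrt M * I)) := hFa0.add tendsto_const_nhds
    rw [zero_add] at hlim
    exact ge_of_tendsto hlim ev
  have hMle : M ≤ 2 * Real.sqrt M * I := by
    refine csSup_le ⟨Fe u 0, ⟨0, rfl⟩⟩ ?_
    rintro _ ⟨s, rfl⟩
    exact key s
  have hsq : Real.sqrt (Fe u t) ≤ Real.sqrt M := Real.sqrt_le_sqrt (hFM t)
  rcases eq_or_lt_of_le (Real.sqrt_nonneg M) with h0 | hpos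
  · refine hsq.trans ?_
    rw [← h0]
    positivity
  · have hMM : Real.sqrt M * Real.sqrt M = M := Real.mul_self_sqrt hM0
    have h2 : Real.sqrt M * Real.sqrt M ≤ (2 * I) * Real.sqrt M := by
      rw [hMM]; linarith
    have h3 : Real.sqrt M ≤ 2 * I := le_of_mul_le_mul_right (by linarith) hpos
    exact hsq.trans h3

/-- For any Schwartz function `u(t,x)`,
`‖u‖_{L^∞_t L²_x} ≤ C ‖(∂_t + ∂ₓₓₓ − ∂ₓₓ + I)u‖_{L¹_t L²_x}`. -/
theorem LinftyL2_bound_by_Y_norm :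
    ∃ C > (0 : ℝ), ∀ u : SchwartzMap (ℝ × ℝ) ℂ, ∀ t : ℝ,
      (∫ x : ℝ, ‖u (t, x)‖ ^ 2) ^ ((1 : ℝ) / 2)
        ≤ C * ∫ s : ℝ, (∫ x : ℝ, ‖kdvbOp (fun s' y => u (s', y)) s x‖ ^ 2) ^ ((1 : ℝ) / 2) := by
  refine ⟨2, by norm_num, fun u t => ?_⟩
  have e1 : (∫ x : ℝ, ‖u (t, x)‖ ^ 2) = Fe u t :=
    integral_congr_ae (Filter.Eventually.of_forall fun x => (dot_self_eq _).symm)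
  have e2 : ∀ s : ℝ, (∫ x : ℝ, ‖kdvbOp (fun s' y => u (s', y)) s x‖ ^ 2) = Fe (W u) s := by
    intro s
    refine integral_congr_ae (Filter.Eventually.of_forall fun x => ?_)
    show ‖kdvbOp (fun s' y => u (s', y)) s x‖ ^ 2 = dot (W u (s, x)) (W u (s, x))
    rw [kdvb_eq u s x, dot_self_eq]
    rfl
  have e3 : (∫ s : ℝ, (∫ x : ℝ, ‖kdvbOp (fun s' y => u (s', y)) s x‖ ^ 2) ^ ((1 : ℝ) / 2))
      = ∫ s : ℝ, Real.sqrt (Fe (W u) s) := by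
    refine integral_congr_ae (Filter.Eventually.of_forall fun s => ?_)
    show (∫ x : ℝ, ‖kdvbOp (fun s' y => u (s', y)) s x‖ ^ 2) ^ ((1 : ℝ) / 2) = _
    rw [e2 s]; exact (Real.sqrt_eq_rpow _).symm
  rw [e1, e3, ← Real.sqrt_eq_rpow]
  exact main_core u t
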